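/- For any positive constants c, σ̄, λ, μ with μ < 1, there exists τ̄ > 0, depending only on c, σ̄, λ, μ, such that u^{BS}(μσ; τ, x, k) + c·eˣ·σ²·τ ≤ u^{BS}(σ; τ, x, k) for all τ ∈ [0, τ̄], all 0 < σ ≤ σ̄, and all x, k with |x − k| ≤ λ·σ·√τ. -/

import Mathlib

noncomputable def Gauss (t x : ℝ) : ℝ :=
  (Real.sqrt (2 * Real.pi * t))⁻¹ * Real.exp (-x ^ 2 / (2 * t))

/-- Standard normal cumulative distribution function. -/
noncomputable def normalCDF (x : ℝ) : ℝ :=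
  (Real.sqrt (2 * Real.pi))⁻¹ * ∫ s in Set.Iic x, Real.exp (-s ^ 2 / 2)

/-- Black–Scholes call price `u^{BS}(σ; τ, x, k)` in log variables. -/
noncomputable def uBS (σ τ x k : ℝ) : ℝ :=
  Real.exp x * normalCDF ((x - k + σ ^ 2 * τ / 2) / (σ * Real.sqrt τ)) -
    Real.exp k * normalCDF ((x - k - σ ^ 2 * τ / 2) / (σ * Real.sqrt τ))

/-- Black–Scholes price extended to `τ = 0` by the call payoff. -/
noncomputable def uBS₀ (σ τ x k : ℝ) : ℝ :=
  if 0 < τ then uBS σ τ x k else max (Real.exp x - Real.exp k) 0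

open Real MeasureTheory

lemma gauss_integrable : Integrable (fun s : ℝ => Real.exp (-s ^ 2 / 2)) := by
  have h : (fun s : ℝ => Real.exp (-s ^ 2 / 2)) = fun s : ℝ => Real.exp (-(1/2 : ℝ) * s ^ 2) := by
    funext s; ring_nf
  rw [h]; exact integrable_exp_neg_mul_sq (by norm_num)

lemma normalCDF_hasDerivAt (x : ℝ) :
    HasDerivAt normalCDF ((Real.sqrt (2 * Real.pi))⁻¹ * Real.exp (-x ^ 2 / 2)) x := by
  have hcont : Continuous fun s : ℝ => Real.exp (-s ^ 2 / 2) := by continuity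
  have hrepr : normalCDF = fun y =>
      normalCDF 0 + (Real.sqrt (2 * Real.pi))⁻¹ * ∫ t in (0:ℝ)..y, Real.exp (-t ^ 2 / 2) := by
    funext y
    have h := intervalIntegral.integral_Iic_sub_Iic (μ := volume) (f := fun s : ℝ => Real.exp (-s ^ 2 / 2))
      (a := 0) (b := y) gauss_integrable.integrableOn gauss_integrable.integrableOn
    unfold normalCDF
    rw [← h]; ring
  have hF : HasDerivAt (fun u => ∫ t in (0:ℝ)..u, Real.exp (-t ^ 2 / 2))
      (Real.exp (-x ^ 2 / 2)) x :=
    intervalIntegral.integral_hasDerivAt_right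
      gauss_integrable.intervalIntegrable (hcont.stronglyMeasurableAtFilter _ _)
      hcont.continuousAt
  rw [hrepr]
  exact (hF.const_mul _).const_add _

lemma hasDerivAt_F (m a : ℝ) (ha : 0 < a) :
    HasDerivAt (fun b => normalCDF (m / b + b / 2) - Real.exp (-m) * normalCDF (m / b - b / 2))
      ((Real.sqrt (2 * Real.pi))⁻¹ * Real.exp (-(m / a + a / 2) ^ 2 / 2)) a := by
  have ha' := ha.ne'
  have h1 : HasDerivAt (fun b : ℝ => m / b + b / 2) (m * -(a ^ 2)⁻¹ + 1 / 2) a := by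
    simpa [div_eq_mul_inv] using
      (((hasDerivAt_inv ha').const_mul m).fun_add ((hasDerivAt_id a).div_const 2))
  have h2 : HasDerivAt (fun b : ℝ => m / b - b / 2) (m * -(a ^ 2)⁻¹ - 1 / 2) a := by
    simpa [div_eq_mul_inv] using
      (((hasDerivAt_inv ha').const_mul m).fun_sub ((hasDerivAt_id a).div_const 2))
  have c1 := (normalCDF_hasDerivAt (m / a + a / 2)).comp a h1
  have c2 := ((normalCDF_hasDerivAt (m / a - a / 2)).comp a h2).const_mul (Real.exp (-m))
  have key : Real.exp (-m) * Real.exp (-(m / a - a / 2) ^ 2 / 2)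
      = Real.exp (-(m / a + a / 2) ^ 2 / 2) := by
    rw [← Real.exp_add]; congr 1; field_simp; ring
  refine (c1.fun_sub c2).congr_deriv ?_
  rw [← key]; ring

set_option maxHeartbeats 1000000 in
theorem stmt_4 (c σbar lam μ : ℝ) (hc : 0 < c) (hσbar : 0 < σbar) (hlam : 0 < lam)
    (hμ : 0 < μ) (hμ1 : μ < 1) :
    ∃ τbar > 0, ∀ τ ∈ Set.Icc (0:ℝ) τbar, ∀ σ : ℝ, 0 < σ → σ ≤ σbar → ∀ x k : ℝ,
      |x - k| ≤ lam * σ * Real.sqrt τ →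
        uBS₀ (μ * σ) τ x k + c * Real.exp x * σ ^ 2 * τ ≤ uBS₀ σ τ x k := by
  set M : ℝ := lam / μ + 1 / 2 with hM
  set K : ℝ := (Real.sqrt (2 * Real.pi))⁻¹ * Real.exp (-M ^ 2 / 2) with hK
  have hKpos : 0 < K := by
    apply mul_pos (inv_pos.2 (Real.sqrt_pos.2 (by positivity))) (Real.exp_pos _)
  set δ : ℝ := min 1 (K * (1 - μ) / c) with hδ
  have hδpos : 0 < δ := lt_min one_pos (div_pos (mul_pos hKpos (by linarith)) hc)
  refine ⟨(δ / σbar) ^ 2, by positivity, ?_⟩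
  rintro τ ⟨hτ0, hτbar⟩ σ hσ hσbar' x k hxk
  rcases eq_or_lt_of_le hτ0 with h0 | hτpos
  · simp [uBS₀, ← h0]
  set a : ℝ := σ * Real.sqrt τ with haa
  have hapos : 0 < a := mul_pos hσ (Real.sqrt_pos.2 hτpos)
  have haδ : a ≤ δ := by
    have h1 : Real.sqrt τ ≤ δ / σbar := by
      rw [show δ / σbar = Real.sqrt ((δ / σbar) ^ 2) from
        (Real.sqrt_sq (by positivity)).symm]
      exact Real.sqrt_le_sqrt hτbar
    calc a ≤ σbar * (δ / σbar) :=
          mul_le_mul hσbar' h1 (Real.sqrt_nonneg _) hσbar.le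
      _ = δ := by field_simp
  have ha1 : a ≤ 1 := haδ.trans (min_le_left _ _)
  have haKc : c * a ≤ K * (1 - μ) := by
    have h := haδ.trans (min_le_right _ _)
    have h2 := mul_le_mul_of_nonneg_right h hc.le
    rw [div_mul_cancel₀ _ hc.ne'] at h2
    linarith
  set m : ℝ := x - k with hm
  have hma : |m| ≤ lam * a := by rw [haa, ← mul_assoc]; exact hxk
  have ha2 : a ^ 2 = σ ^ 2 * τ := by
    rw [haa, mul_pow, Real.sq_sqrt hτ0]
  set f : ℝ → ℝ :=
    fun b => normalCDF (m / b + b / 2) - Real.exp (-m) * normalCDF (m / b - b / 2) with hf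
  have hek : Real.exp k = Real.exp x * Real.exp (-m) := by
    rw [← Real.exp_add]; congr 1; rw [hm]; ring
  have hu : ∀ s : ℝ, 0 < s → uBS s τ x k = Real.exp x * f (s * Real.sqrt τ) := by
    intro s hs
    have hsτ : 0 < s * Real.sqrt τ := mul_pos hs (Real.sqrt_pos.2 hτpos)
    have hs2 : s ^ 2 * τ = (s * Real.sqrt τ) ^ 2 := by
      rw [mul_pow, Real.sq_sqrt hτ0]
    unfold uBS
    rw [hs2, hek, hf, ← hm]
    have e1 : (m + (s * Real.sqrt τ) ^ 2 / 2) / (s * Real.sqrt τ)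
        = m / (s * Real.sqrt τ) + (s * Real.sqrt τ) / 2 := by field_simp
    have e2 : (m - (s * Real.sqrt τ) ^ 2 / 2) / (s * Real.sqrt τ)
        = m / (s * Real.sqrt τ) - (s * Real.sqrt τ) / 2 := by field_simp
    rw [e1, e2]; ring
  have hμa : 0 < μ * a := mul_pos hμ hapos
  -- the mean value bound
  have hmain : K * (a - μ * a) ≤ f a - f (μ * a) := by
    have hder : ∀ b ∈ Set.Icc (μ * a) a, HasDerivAt f
        ((Real.sqrt (2 * Real.pi))⁻¹ * Real.exp (-(m / b + b / 2) ^ 2 / 2)) b := by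
      intro b hb
      exact hasDerivAt_F m b (lt_of_lt_of_le hμa hb.1)
    have hval := (convex_Icc (μ * a) a).mul_sub_le_image_sub_of_le_deriv
      (f := f) (C := K)
      (fun b hb => ((hder b hb).continuousAt).continuousWithinAt)
      (fun b hb => ((hder b (interior_subset hb)).differentiableAt).differentiableWithinAt)
      ?_ (μ * a) ⟨le_refl _, by nlinarith⟩ a ⟨by nlinarith, le_refl _⟩ (by nlinarith)
    · linarith [hval]
    · intro b hb
      rw [interior_Icc] at hb
      have hbpos : 0 < b := hμa.trans hb.1
      rw [((hder b ⟨hb.1.le, hb.2.le⟩).deriv)]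
      rw [hK]
      apply mul_le_mul_of_nonneg_left _ (by positivity)
      apply Real.exp_le_exp.2
      have habs : |m / b + b / 2| ≤ M := by
        have h1 : |m / b| ≤ lam / μ := by
          rw [abs_div, abs_of_pos hbpos, div_le_div_iff₀ hbpos hμ]
          calc |m| * μ ≤ (lam * a) * μ := by
                exact mul_le_mul_of_nonneg_right hma hμ.le
            _ ≤ lam * b := by nlinarith [hb.1]
        have h2 : |b / 2| ≤ 1 / 2 := by
          rw [abs_of_pos (by positivity)]
          nlinarith [hb.2]
        calc |m / b + b / 2| ≤ |m / b| + |b / 2| := abs_add_le _ _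
          _ ≤ M := by rw [hM]; linarith
      have := sq_le_sq' (neg_le_of_abs_le habs |>.trans_eq' rfl) (le_of_abs_le habs)
      linarith
  -- assemble
  have hτeq : τ = Real.sqrt τ * Real.sqrt τ := (Real.mul_self_sqrt hτ0).symm
  have hcτ : c * Real.exp x * σ ^ 2 * τ ≤ Real.exp x * (K * (a - μ * a)) := by
    have h1 : c * (σ ^ 2 * τ) ≤ K * (1 - μ) * a := by
      rw [← ha2]
      calc c * a ^ 2 = (c * a) * a := by ring
        _ ≤ K * (1 - μ) * a := mul_le_mul_of_nonneg_right haKc hapos.le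
    calc c * Real.exp x * σ ^ 2 * τ = Real.exp x * (c * (σ ^ 2 * τ)) := by ring
      _ ≤ Real.exp x * (K * (1 - μ) * a) :=
          mul_le_mul_of_nonneg_left h1 (Real.exp_pos x).le
      _ = Real.exp x * (K * (a - μ * a)) := by ring
  have hμσ : (0:ℝ) < μ * σ := mul_pos hμ hσ
  have hee : Real.exp x * (K * (a - μ * a)) ≤ Real.exp x * (f a - f (μ * a)) :=
    mul_le_mul_of_nonneg_left hmain (Real.exp_pos x).le
  rw [uBS₀, uBS₀, if_pos hτpos, if_pos hτpos, hu σ hσ, hu (μ * σ) hμσ,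
    show μ * σ * Real.sqrt τ = μ * a by rw [haa]; ring]
  nlinarith [hcτ, hee]
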